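/- Let G be an n×n real matrix with G_{jj} = 1 − ε_{jj} and G_{jr} = −ε_{jr} for r ≠ j, where all ε_{jr} ≥ 0 satisfy Σ_{r=1}^n ε_{jr} ≤ 1/2 for each j. If e, H ∈ ℝ^n have nonnegative entries and Ge ≤ H componentwise, then e_j ≤ 2 (H_j + max_r H_r) for all j; in particular each e_j is bounded by a constant multiple of max_r H_r. -/
import Mathlib

theorem diagonally_dominant_bound (n : ℕ) (hn : 0 < n)
    (ε : Fin n → Fin n → ℝ) (hε : ∀ j r, 0 ≤ ε j r)
    (hrow : ∀ j, ∑ r, ε j r ≤ 1 / 2)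
    (e H : Fin n → ℝ) (he : ∀ j, 0 ≤ e j) (hH : ∀ j, 0 ≤ H j)
    (hGe : ∀ j, e j - ∑ r, ε j r * e r ≤ H j) :
    ∀ j, e j ≤ 2 * (H j +
      Finset.univ.sup' (Finset.univ_nonempty_iff.mpr ⟨⟨0, hn⟩⟩) H) := by
  have ne : (Finset.univ : Finset (Fin n)).Nonempty :=
    Finset.univ_nonempty_iff.mpr ⟨⟨0, hn⟩⟩
  set S := Finset.univ.sup' ne e with hS
  set SH := Finset.univ.sup' ne H with hSH
  obtain ⟨j0, -, hj0⟩ := Finset.exists_mem_eq_sup' ne e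
  have hle : ∀ r, e r ≤ S := fun r => Finset.le_sup' e (Finset.mem_univ r)
  have hS0 : 0 ≤ S := le_trans (he j0) (hle j0)
  have hsum : ∑ r, ε j0 r * e r ≤ (1/2) * S := by
    calc ∑ r, ε j0 r * e r ≤ ∑ r, ε j0 r * S := by
          apply Finset.sum_le_sum
          intro r _
          exact mul_le_mul_of_nonneg_left (hle r) (hε j0 r)
      _ = (∑ r, ε j0 r) * S := by rw [Finset.sum_mul]
      _ ≤ (1/2) * S := mul_le_mul_of_nonneg_right (hrow j0) hS0
  have hSb : S ≤ 2 * H j0 := by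
    have h2 := hGe j0
    have hje : e j0 = S := by rw [hS, hj0]
    linarith
  have hHle : H j0 ≤ SH := Finset.le_sup' H (Finset.mem_univ j0)
  intro j
  have := hle j
  have := hH j
  linarith
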